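/- The characteristic polynomial of the block matrix [⟨T,S⟩] ∈ M_{nm}(F), which has identity blocks I on the superdiagonal, blocks a_0 T, a_1 T, ..., a_{n-1} T in the last block row, and zero blocks elsewhere, equals f_S(λ)^m · f_T(λ^n / f_S(λ)), where f_S(λ) = a_0 + a_1 λ + ... + a_{n-1} λ^{n-1} and f_T is the characteristic polynomial of T. Formally, it equals the homogenization: char([⟨T,S⟩]) = Σ_i c_i (λ^n)^i f_S(λ)^{m-i} where f_T(x) = Σ_i c_i x^i. -/

import Mathlib

open Polynomial Matrix

/-- The `nm × nm` TSR block matrix: identity blocks on the superdiagonal and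
blocks `a_i • T` in the last block row. Indices are pairs `(i, k)` with
`i : Fin n` the block-row index and `k : Fin m` the index inside the block. -/
def tsrMatrix {F : Type*} [Field F] {m n : ℕ} (T : Matrix (Fin m) (Fin m) F)
    (a : Fin n → F) : Matrix (Fin n × Fin m) (Fin n × Fin m) F :=
  fun p q =>
    if (q.1 : ℕ) = (p.1 : ℕ) + 1 then (if p.2 = q.2 then 1 else 0)
    else if (p.1 : ℕ) = n - 1 then a q.1 * T p.2 q.2
    else 0

section TsrAux

lemma eval_charpoly' {S : Type*} [CommRing S] {k : ℕ} (N : Matrix (Fin k) (Fin k) S) (c : S) :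
    N.charpoly.eval c = (c • (1 : Matrix (Fin k) (Fin k) S) - N).det := by
  rw [Matrix.charpoly, ← Polynomial.coe_evalRingHom, RingHom.map_det]
  congr 1
  ext i j
  by_cases h : i = j <;>
    simp [charmatrix_apply, h, Matrix.one_apply, Matrix.diagonal_apply]

lemma det_homog {F : Type*} [Field F] {m : ℕ} (M : Matrix (Fin m) (Fin m) F)
    (u g : F[X]) :
    (u • (1 : Matrix (Fin m) (Fin m) F[X]) - g • M.map C).det =
      ∑ i ∈ Finset.range (m + 1), C (M.charpoly.coeff i) * u ^ i * g ^ (m - i) := by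
  rcases eq_or_ne g 0 with hg | hg
  · subst hg
    have hc : M.charpoly.coeff m = 1 := by
      have h := M.charpoly_monic.coeff_natDegree
      rwa [Matrix.charpoly_natDegree_eq_dim, Fintype.card_fin] at h
    rw [Finset.sum_eq_single m]
    · simp [Matrix.det_smul, hc]
    · intro i hi hne
      have : m - i ≠ 0 := by
        simp only [Finset.mem_range] at hi; omega
      simp [zero_pow this]
    · simp
  · set K := FractionRing F[X]
    have hφ : Function.Injective (algebraMap F[X] K) := IsFractionRing.injective _ _
    apply hφ
    set φ := algebraMap F[X] K
    set ψ : F →+* K := φ.comp (C : F →+* F[X]) with hψ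
    set M' : Matrix (Fin m) (Fin m) K := M.map ψ with hM'
    have key : φ ((u • (1 : Matrix (Fin m) (Fin m) F[X]) - g • M.map C).det)
        = ((φ u) • (1 : Matrix (Fin m) (Fin m) K) - (φ g) • M').det := by
      rw [RingHom.map_det]
      congr 1
      ext i j
      by_cases h : i = j <;>
        simp [RingHom.mapMatrix_apply, Matrix.map_apply, h, Matrix.one_apply, hM', hψ]
    rw [key]
    have ht : φ g ≠ 0 := fun h => hg (hφ (h.trans (map_zero φ).symm))
    set t := φ g
    set a := φ u
    have h1 : a • (1 : Matrix (Fin m) (Fin m) K) - t • M'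
        = t • ((t⁻¹ * a) • (1 : Matrix (Fin m) (Fin m) K) - M') := by
      rw [smul_sub, smul_smul]
      rw [← mul_assoc, mul_inv_cancel₀ ht, one_mul]
    rw [h1, Matrix.det_smul, ← eval_charpoly']
    have hcp : M'.charpoly = M.charpoly.map ψ := (Matrix.charpoly_map M ψ)
    have hdeg : (M.charpoly.map ψ).natDegree = m := by
      rw [← hcp, Matrix.charpoly_natDegree_eq_dim, Fintype.card_fin]
    rw [hcp, Polynomial.eval_eq_sum_range, hdeg]
    rw [map_sum, Finset.mul_sum]
    simp only [Fintype.card_fin, Polynomial.coeff_map]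
    refine Finset.sum_congr rfl fun i hi => ?_
    rw [Finset.mem_range] at hi
    have him : i ≤ m := by omega
    rw [_root_.map_mul, _root_.map_mul, map_pow, map_pow]
    rw [mul_pow, pow_sub₀ t ht him]
    have : φ (C (M.charpoly.coeff i)) = ψ (M.charpoly.coeff i) := rfl
    rw [this]
    rw [inv_pow]
    ring

section

variable {F : Type*} [Field F] {m n : ℕ}

noncomputable def tsrM (T : Matrix (Fin m) (Fin m) F) (a : Fin n → F) :
    Matrix (Fin n) (Fin n) (Matrix (Fin m) (Fin m) F[X]) := fun i j =>
  (if j = i then (X : F[X]) • (1 : Matrix (Fin m) (Fin m) F[X]) else 0)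
    - (if (j : ℕ) = (i : ℕ) + 1 then 1
       else if (i : ℕ) = n - 1 then C (a j) • T.map C else 0)

noncomputable def tsrV (F : Type*) [Field F] (m n : ℕ) :
    Matrix (Fin n) (Fin n) (Matrix (Fin m) (Fin m) F[X]) :=
  fun i j => if (j : ℕ) ≤ (i : ℕ) then (X ^ ((i : ℕ) - (j : ℕ)) : F[X]) • (1 : Matrix (Fin m) (Fin m) F[X]) else 0

noncomputable def tsrQ (T : Matrix (Fin m) (Fin m) F) (a : Fin n → F) (k : ℕ) :
    Matrix (Fin m) (Fin m) F[X] :=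
  (X ^ (n - k) : F[X]) • 1
    - (∑ j : Fin n, if k ≤ (j : ℕ) then C (a j) * X ^ ((j : ℕ) - k) else 0) • T.map C

noncomputable def tsrL (T : Matrix (Fin m) (Fin m) F) (a : Fin n → F) :
    Matrix (Fin n) (Fin n) (Matrix (Fin m) (Fin m) F[X]) := fun i j =>
  if j = i then 1
  else if (i : ℕ) = n - 1 ∧ (j : ℕ) + 1 ≤ n - 1 then tsrQ T a ((j : ℕ) + 1) else 0

noncomputable def tsrW (T : Matrix (Fin m) (Fin m) F) (a : Fin n → F) :
    Matrix (Fin n) (Fin n) (Matrix (Fin m) (Fin m) F[X]) := fun i k =>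
  if (k : ℕ) = (i : ℕ) + 1 then -1
  else if (i : ℕ) = n - 1 ∧ (k : ℕ) = 0 then tsrQ T a 0 else 0

lemma tsrMV (T : Matrix (Fin m) (Fin m) F) (a : Fin n → F) (i k : Fin n) :
    (tsrM T a * tsrV F m n) i k =
      if (k : ℕ) = (i : ℕ) + 1 then -1
      else if (i : ℕ) = n - 1 then tsrQ T a (k : ℕ) else 0 := by
  rw [Matrix.mul_apply]
  simp only [tsrM, sub_mul, Finset.sum_sub_distrib]
  have hfirst : (∑ j : Fin n, (if j = i then (X : F[X]) • (1 : Matrix (Fin m) (Fin m) F[X]) else 0) * tsrV F m n j k)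
      = (X : F[X]) • tsrV F m n i k := by
    rw [Finset.sum_eq_single i]
    · rw [if_pos rfl, Matrix.smul_mul, Matrix.one_mul]
    · intro j _ hj; rw [if_neg hj, Matrix.zero_mul]
    · intro h; exact absurd (Finset.mem_univ i) h
  rw [hfirst]
  by_cases hi : (i : ℕ) = n - 1
  · -- last block row
    have hnone : ∀ j : Fin n, (j : ℕ) ≠ (i : ℕ) + 1 := by
      intro j; have := j.isLt; have := i.isLt; omega
    have h2 : (∑ j : Fin n, (if (j : ℕ) = (i : ℕ) + 1 then (1 : Matrix (Fin m) (Fin m) F[X])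
        else if (i : ℕ) = n - 1 then C (a j) • T.map C else 0) * tsrV F m n j k)
        = (∑ j : Fin n, if (k : ℕ) ≤ (j : ℕ) then C (a j) * X ^ ((j : ℕ) - (k : ℕ)) else 0) • T.map C := by
      rw [Finset.sum_smul]
      refine Finset.sum_congr rfl fun j _ => ?_
      rw [if_neg (hnone j), if_pos hi, tsrV]
      by_cases hkj : (k : ℕ) ≤ (j : ℕ)
      · rw [if_pos hkj, if_pos hkj, Matrix.smul_mul, Matrix.mul_smul, Matrix.mul_one,
          smul_smul]
      · rw [if_neg hkj, if_neg hkj, Matrix.mul_zero, zero_smul]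
    rw [h2]
    have hk1 : ¬ ((k : ℕ) = (i : ℕ) + 1) := hnone k
    rw [if_neg hk1, if_pos hi, tsrQ, tsrV]
    have hki : (k : ℕ) ≤ (i : ℕ) := by have := k.isLt; omega
    rw [if_pos hki, smul_smul]
    have : (X : F[X]) * X ^ ((i : ℕ) - (k : ℕ)) = X ^ (n - (k : ℕ)) := by
      rw [← pow_succ']
      congr 1
      have := k.isLt; omega
    rw [this]
  · -- not last block row
    have hlt : (i : ℕ) + 1 < n := by have := i.isLt; omega
    set i' : Fin n := ⟨(i : ℕ) + 1, hlt⟩ with hi'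
    have h2 : (∑ j : Fin n, (if (j : ℕ) = (i : ℕ) + 1 then (1 : Matrix (Fin m) (Fin m) F[X])
        else if (i : ℕ) = n - 1 then C (a j) • T.map C else 0) * tsrV F m n j k)
        = tsrV F m n i' k := by
      rw [Finset.sum_eq_single i']
      · rw [if_pos rfl, Matrix.one_mul]
      · intro j _ hj
        have : (j : ℕ) ≠ (i : ℕ) + 1 := by
          intro h; exact hj (Fin.ext h)
        rw [if_neg this, if_neg hi, Matrix.zero_mul]
      · intro h; exact absurd (Finset.mem_univ i') h
    rw [h2, if_neg hi, tsrV, tsrV]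
    by_cases hk : (k : ℕ) = (i : ℕ) + 1
    · rw [if_pos hk]
      have h3 : ¬ ((k : ℕ) ≤ (i : ℕ)) := by omega
      have h4 : (k : ℕ) ≤ (i' : ℕ) := by simp [hi', hk]
      rw [if_neg h3, if_pos h4, smul_zero]
      have : (i' : ℕ) - (k : ℕ) = 0 := by simp [hi', hk]
      rw [this, pow_zero, one_smul, zero_sub]
    · rw [if_neg hk]
      by_cases hki : (k : ℕ) ≤ (i : ℕ)
      · have hki' : (k : ℕ) ≤ (i' : ℕ) := by simp [hi']; omega
        rw [if_pos hki, if_pos hki', smul_smul]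
        have : (X : F[X]) * X ^ ((i : ℕ) - (k : ℕ)) = X ^ ((i' : ℕ) - (k : ℕ)) := by
          rw [← pow_succ']
          congr 1
          simp [hi']; omega
        rw [this, sub_self]
      · have hki' : ¬ ((k : ℕ) ≤ (i' : ℕ)) := by simp [hi']; omega
        rw [if_neg hki, if_neg hki', smul_zero, sub_zero]

lemma tsrLMV (T : Matrix (Fin m) (Fin m) F) (a : Fin n → F) (i k : Fin n) :
    (tsrL T a * (tsrM T a * tsrV F m n)) i k = tsrW T a i k := by
  rw [Matrix.mul_apply]
  simp only [tsrMV, tsrL, tsrW]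
  by_cases hi : (i : ℕ) = n - 1
  · have hik : ¬ ((k : ℕ) = (i : ℕ) + 1) := by
      have := k.isLt; have := i.isLt; omega
    rw [if_neg hik]
    by_cases hk : (k : ℕ) = 0
    · rw [if_pos ⟨hi, hk⟩]
      rw [Finset.sum_eq_single i]
      · rw [if_pos rfl, Matrix.one_mul, if_neg hik, if_pos hi, hk]
      · intro j _ hj
        have hjne : (j : ℕ) ≠ n - 1 := fun h => hj (Fin.ext (h.trans hi.symm))
        have hkj : ¬ ((k : ℕ) = (j : ℕ) + 1) := by omega
        rw [if_neg hkj, if_neg hjne, Matrix.mul_zero]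
      · intro h; exact absurd (Finset.mem_univ i) h
    · rw [if_neg (by intro h; exact hk h.2)]
      have hn2 : 2 ≤ n := by have := k.isLt; have := i.isLt; omega
      have hklt : (k : ℕ) - 1 < n := by have := k.isLt; omega
      set j0 : Fin n := ⟨(k : ℕ) - 1, hklt⟩ with hj0
      have hj0i : j0 ≠ i := by
        intro h
        have : (j0 : ℕ) = (i : ℕ) := congrArg Fin.val h
        simp [hj0, hi] at this
        have := k.isLt; omega
      have hsplit : ∀ j : Fin n, j ∈ (Finset.univ : Finset (Fin n)) → j ≠ i ∧ j ≠ j0 →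
          ((if j = i then (1 : Matrix (Fin m) (Fin m) F[X])
            else if (i : ℕ) = n - 1 ∧ (j : ℕ) + 1 ≤ n - 1 then tsrQ T a ((j : ℕ) + 1) else 0) *
            (if (k : ℕ) = (j : ℕ) + 1 then -1
             else if (j : ℕ) = n - 1 then tsrQ T a (k : ℕ) else 0)) = 0 := by
        rintro j _ ⟨hji, hjj0⟩
        rw [if_neg hji]
        have hjne : (j : ℕ) ≠ n - 1 := fun h => hji (Fin.ext (h.trans hi.symm))
        have hkj : ¬ ((k : ℕ) = (j : ℕ) + 1) := by
          intro h
          exact hjj0 (Fin.ext (by simp [hj0]; omega))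
        rw [if_neg hkj, if_neg hjne, Matrix.mul_zero]
      rw [Finset.sum_eq_add_of_mem i j0 (Finset.mem_univ i) (Finset.mem_univ j0)
        (Ne.symm hj0i) hsplit]
      have hterm1 : (if i = i then (1 : Matrix (Fin m) (Fin m) F[X])
            else if (i : ℕ) = n - 1 ∧ (i : ℕ) + 1 ≤ n - 1 then tsrQ T a ((i : ℕ) + 1) else 0) *
            (if (k : ℕ) = (i : ℕ) + 1 then -1
             else if (i : ℕ) = n - 1 then tsrQ T a (k : ℕ) else 0) = tsrQ T a (k : ℕ) := by
        rw [if_pos rfl, Matrix.one_mul, if_neg hik, if_pos hi]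
      have hj0val : (j0 : ℕ) + 1 = (k : ℕ) := by simp [hj0]; omega
      have hterm2 : (if j0 = i then (1 : Matrix (Fin m) (Fin m) F[X])
            else if (i : ℕ) = n - 1 ∧ (j0 : ℕ) + 1 ≤ n - 1 then tsrQ T a ((j0 : ℕ) + 1) else 0) *
            (if (k : ℕ) = (j0 : ℕ) + 1 then -1
             else if (j0 : ℕ) = n - 1 then tsrQ T a (k : ℕ) else 0) = -(tsrQ T a (k : ℕ)) := by
        have hle : (j0 : ℕ) + 1 ≤ n - 1 := by
          have := k.isLt; simp [hj0]; omega
        rw [if_neg hj0i, if_pos ⟨hi, hle⟩, if_pos hj0val.symm, hj0val, Matrix.mul_neg,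
          Matrix.mul_one]
      rw [hterm1, hterm2, add_neg_cancel]
  · rw [Finset.sum_eq_single i]
    · simp only [if_pos rfl, Matrix.one_mul]
      by_cases hk : (k : ℕ) = (i : ℕ) + 1 <;> simp [hk, hi]
    · intro j _ hj
      rw [if_neg hj, if_neg (fun h : _ ∧ _ => hi h.1), Matrix.zero_mul]
    · intro h; exact absurd (Finset.mem_univ i) h

lemma comp_tsrM (T : Matrix (Fin m) (Fin m) F) (a : Fin n → F) :
    Matrix.compRingEquiv (Fin n) (Fin m) F[X] (tsrM T a) = charmatrix (tsrMatrix T a) := by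
  refine Matrix.ext fun ⟨i, p⟩ ⟨j, q⟩ => ?_
  show tsrM T a i j p q = _
  rw [charmatrix_apply]
  simp only [tsrM, tsrMatrix, Matrix.sub_apply, Matrix.diagonal_apply,
    apply_ite (fun M : Matrix (Fin m) (Fin m) F[X] => M p q), Matrix.zero_apply,
    Matrix.smul_apply, Matrix.one_apply, Matrix.map_apply, smul_eq_mul,
    apply_ite (C : F → F[X]), _root_.map_mul, map_zero, _root_.map_one, Prod.mk.injEq]
  by_cases h1 : (j : ℕ) = (i : ℕ) + 1
  · have hij : ¬ (i = j ∧ p = q) := by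
      rintro ⟨rfl, _⟩; omega
    have hji : j ≠ i := by intro h; subst h; omega
    simp only [if_pos h1, if_neg hji, if_neg hij]
  · simp only [if_neg h1]
    by_cases hji : j = i
    · subst hji
      by_cases hpq : p = q <;> simp [hpq]
    · have hij : ¬ (i = j ∧ p = q) := fun h => hji h.1.symm
      simp only [if_neg hji, if_neg hij]

lemma det_comp_lowerUni {R' : Type*} [CommRing R']
    (A : Matrix (Fin n) (Fin n) (Matrix (Fin m) (Fin m) R'))
    (hlow : ∀ i j, i < j → A i j = 0) (hdiag : ∀ i, A i i = 1) :
    (Matrix.compRingEquiv (Fin n) (Fin m) R' A).det = 1 := by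
  rw [← Matrix.det_transpose]
  have hbt : ((Matrix.compRingEquiv (Fin n) (Fin m) R' A)ᵀ).BlockTriangular Prod.fst := by
    rintro ⟨i, p⟩ ⟨j, q⟩ h
    show A j i q p = 0
    rw [hlow j i h]
    rfl
  rw [hbt.det]
  refine Finset.prod_eq_one fun b _ => ?_
  have : ((Matrix.compRingEquiv (Fin n) (Fin m) R' A)ᵀ.toSquareBlock Prod.fst b) = 1 := by
    refine Matrix.ext fun ⟨x, hx⟩ ⟨y, hy⟩ => ?_
    show A y.1 x.1 y.2 x.2 = _
    rcases x with ⟨x1, x2⟩; rcases y with ⟨y1, y2⟩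
    simp only at hx hy
    subst hx; subst hy
    rw [hdiag, Matrix.one_apply, Matrix.one_apply]
    simp [Subtype.ext_iff, Prod.ext_iff, eq_comm]
  rw [this, Matrix.det_one]

lemma det_comp_tsrW (T : Matrix (Fin m) (Fin m) F) (a : Fin n → F) (hn : 1 ≤ n) :
    (Matrix.compRingEquiv (Fin n) (Fin m) F[X] (tsrW T a)).det = (tsrQ T a 0).det := by
  obtain ⟨n', rfl⟩ : ∃ n', n = n' + 1 := ⟨n - 1, by omega⟩
  set σ : Equiv.Perm (Fin (n' + 1)) := finRotate (n' + 1) with hσ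
  set e : Equiv.Perm (Fin (n' + 1) × Fin m) :=
    Equiv.prodCongrLeft (fun _ : Fin m => σ⁻¹) with he
  set d : Fin (n' + 1) → Matrix (Fin m) (Fin m) F[X] :=
    fun i => if (i : ℕ) = n' then tsrQ T a 0 else -1 with hd
  have hW : Matrix.compRingEquiv (Fin (n' + 1)) (Fin m) F[X] (tsrW T a)
      = ((Matrix.blockDiagonal d).submatrix (Equiv.prodComm (Fin (n' + 1)) (Fin m))
          (Equiv.prodComm (Fin (n' + 1)) (Fin m))).submatrix id e := by
    refine Matrix.ext fun ⟨i, p⟩ ⟨j, q⟩ => ?_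
    show tsrW T a i j p q = Matrix.blockDiagonal d (p, i) (q, σ⁻¹ j)
    rw [Matrix.blockDiagonal_apply]
    dsimp only
    have hiff : i = σ⁻¹ j ↔ σ i = j := by
      constructor
      · rintro rfl; simp
      · rintro rfl; simp
    rw [tsrW]
    by_cases hi : (i : ℕ) = n'
    · have hil : i = Fin.last n' := Fin.ext hi
      have hσi : σ i = 0 := by rw [hil, hσ]; exact finRotate_last
      have hj1 : ¬ ((j : ℕ) = (i : ℕ) + 1) := by have := j.isLt; omega
      by_cases hj : (j : ℕ) = 0
      · have hcond : i = σ⁻¹ j := by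
          rw [hiff, hσi]; exact Fin.ext hj.symm
        rw [if_neg hj1, if_pos ⟨(by omega : (i : ℕ) = n' + 1 - 1), hj⟩, if_pos hcond, hd]
        simp [hi]
      · have hcond : ¬ i = σ⁻¹ j := by
          rw [hiff, hσi]; intro h; exact hj (by rw [← h]; rfl)
        rw [if_neg hj1, if_neg (fun h => hj h.2), if_neg hcond]
        rfl
    · have hσi : (σ i : ℕ) = (i : ℕ) + 1 := by
        have hlt : (i : ℕ) < n' := by have := i.isLt; omega
        rw [hσ]
        have hieq : i = ⟨(i : ℕ), hlt.trans_le n'.le_succ⟩ := Fin.ext rfl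
        rw [hieq, finRotate_of_lt hlt]
      by_cases hj : (j : ℕ) = (i : ℕ) + 1
      · have hcond : i = σ⁻¹ j := by rw [hiff]; exact Fin.ext (by omega)
        rw [if_pos hj, if_pos hcond, hd]
        simp [hi]
      · have hcond : ¬ i = σ⁻¹ j := by
          rw [hiff]; intro h; exact hj (by rw [← h, hσi])
        rw [if_neg hj, if_neg (fun h => absurd h.1 (by omega : ¬ (i : ℕ) = n' + 1 - 1)),
          if_neg hcond]
        rfl
  rw [hW, Matrix.det_permute', Matrix.det_submatrix_equiv_self, Matrix.det_blockDiagonal]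
  have hprod : (∏ k : Fin (n' + 1), (d k).det) = ((-1 : F[X]) ^ m) ^ n' * (tsrQ T a 0).det := by
    rw [Fin.prod_univ_castSucc]
    have h1 : ∀ i : Fin n', (d i.castSucc).det = (-1 : F[X]) ^ m := by
      intro i
      have : (i.castSucc : ℕ) ≠ n' := by have := i.isLt; simp; omega
      rw [hd]
      simp only [if_neg this]
      rw [show (-1 : Matrix (Fin m) (Fin m) F[X]) = -(1 : Matrix (Fin m) (Fin m) F[X]) from rfl,
        Matrix.det_neg, Matrix.det_one, Fintype.card_fin, mul_one]
    have h2 : (d (Fin.last n')).det = (tsrQ T a 0).det := by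
      rw [hd]; simp
    rw [Finset.prod_congr rfl (fun i _ => h1 i), h2, Finset.prod_const, Finset.card_univ,
      Fintype.card_fin]
  rw [hprod]
  have hsign : ((Equiv.Perm.sign e : ℤ) : F[X]) = ((-1 : F[X]) ^ m) ^ n' := by
    rw [he, Equiv.Perm.sign_prodCongrLeft]
    simp only [Equiv.Perm.sign_inv, hσ, sign_finRotate, Finset.prod_const, Finset.card_univ,
      Fintype.card_fin]
    push_cast
    ring
  rw [hsign, ← mul_assoc, ← pow_mul, ← pow_add, ← two_mul, pow_mul, neg_one_sq,
    one_pow, one_mul]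

end

end TsrAux

theorem tsr_charpoly {F : Type*} [Field F] {m n : ℕ} (hm : 1 ≤ m) (hn : 1 ≤ n)
    (T : Matrix (Fin m) (Fin m) F) (a : Fin n → F) :
    (tsrMatrix T a).charpoly =
      ∑ i ∈ Finset.range (m + 1),
        C (T.charpoly.coeff i) * (X ^ n) ^ i *
          (∑ j : Fin n, C (a j) * X ^ (j : ℕ)) ^ (m - i) := by
  have hfact : tsrL T a * (tsrM T a * tsrV F m n) = tsrW T a :=
    Matrix.ext fun i k => tsrLMV T a i k
  have hL : (Matrix.compRingEquiv (Fin n) (Fin m) F[X] (tsrL T a)).det = 1 := by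
    refine det_comp_lowerUni _ (fun i j hij => ?_) (fun i => by simp [tsrL])
    have h1 : j ≠ i := hij.ne'
    have h2 : ¬ ((i : ℕ) = n - 1 ∧ (j : ℕ) + 1 ≤ n - 1) := by
      rintro ⟨ha, hb⟩
      have := Fin.lt_iff_val_lt_val.mp hij
      omega
    simp [tsrL, h1, h2]
    intro ha hb; exact absurd ⟨ha, by omega⟩ h2
  have hV : (Matrix.compRingEquiv (Fin n) (Fin m) F[X] (tsrV F m n)).det = 1 := by
    refine det_comp_lowerUni _ (fun i j hij => ?_) (fun i => by simp [tsrV])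
    have : ¬ ((j : ℕ) ≤ (i : ℕ)) := by
      have := Fin.lt_iff_val_lt_val.mp hij; omega
    simp [tsrV, this]
  have hMdet : (Matrix.compRingEquiv (Fin n) (Fin m) F[X] (tsrM T a)).det
      = (tsrQ T a 0).det := by
    rw [← det_comp_tsrW T a hn, ← hfact, _root_.map_mul, _root_.map_mul,
      Matrix.det_mul, Matrix.det_mul, hL, hV, one_mul, mul_one]
  have hQ0 : tsrQ T a 0 = (X ^ n : F[X]) • (1 : Matrix (Fin m) (Fin m) F[X])
      - (∑ j : Fin n, C (a j) * X ^ (j : ℕ)) • T.map C := by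
    rw [tsrQ]
    simp
  rw [Matrix.charpoly, ← comp_tsrM, hMdet, hQ0]
  exact det_homog T (X ^ n) _
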